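/- arXiv:2003.09413 — 2 statements merged into one kernel-verified Lean document; each statement's English description precedes it below -/
import Mathlib

section
/- Let {f_n}_{n=1}^∞ be a sequence in a complex Hilbert space H such that M = {f_n + f_{n+1}}_{n=1}^∞ and N = {f_n − f_{n+1}}_{n=1}^∞ are both frames for H. Then F = {f_n}_{n=1}^∞ is a frame for H, and the frame operators satisfy 4 S_F f = S_M f + S_N f + 2⟨f, f_1⟩ f_1 for all f ∈ H. -/
/-- A sequence `g` in a complex Hilbert space is a frame. -/
def IsFrame {H : Type*} [NormedAddCommGroup H] [InnerProductSpace ℂ H]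
    (g : ℕ → H) : Prop :=
  ∃ A B : ℝ, 0 < A ∧ 0 < B ∧ ∀ x : H,
    Summable (fun n => ‖(inner ℂ x (g n) : ℂ)‖ ^ 2) ∧
    A * ‖x‖ ^ 2 ≤ ∑' n, ‖(inner ℂ x (g n) : ℂ)‖ ^ 2 ∧
    ∑' n, ‖(inner ℂ x (g n) : ℂ)‖ ^ 2 ≤ B * ‖x‖ ^ 2

/-- The frame operator of a sequence `g`: `S x = ∑ₙ ⟨x, gₙ⟩ gₙ`
(in Mathlib's convention, `⟨x, gₙ⟩ = inner (g n) x`). -/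
noncomputable def frameOp {H : Type*} [NormedAddCommGroup H] [InnerProductSpace ℂ H]
    (g : ℕ → H) (x : H) : H :=
  ∑' n, (inner ℂ (g n) x : ℂ) • g n

section Aux
variable {H : Type*} [NormedAddCommGroup H] [InnerProductSpace ℂ H]

lemma myPar (a b : ℂ) : ‖a + b‖ ^ 2 + ‖a - b‖ ^ 2 = 2 * ‖a‖ ^ 2 + 2 * ‖b‖ ^ 2 := by
  have := parallelogram_law_with_norm ℂ a b
  nlinarith [this]

lemma myVecId (u v : H) (x : H) :
    (inner ℂ (u + v) x : ℂ) • (u + v) + (inner ℂ (u - v) x : ℂ) • (u - v) =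
      (2 : ℂ) • ((inner ℂ u x : ℂ) • u) + (2 : ℂ) • ((inner ℂ v x : ℂ) • v) := by
  simp only [inner_add_left, inner_sub_left, smul_add, smul_sub, add_smul, sub_smul, two_smul]
  abel

lemma myNormSumSqLe (g : ℕ → H) (B : ℝ) (hB : 0 ≤ B)
    (hsum : ∀ y : H, Summable (fun n => ‖(inner ℂ y (g n) : ℂ)‖ ^ 2))
    (hub : ∀ y : H, ∑' n, ‖(inner ℂ y (g n) : ℂ)‖ ^ 2 ≤ B * ‖y‖ ^ 2)
    (c : ℕ → ℂ) (t : Finset ℕ) :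
    ‖∑ n ∈ t, c n • g n‖ ^ 2 ≤ B * ∑ n ∈ t, ‖c n‖ ^ 2 := by
  set v := ∑ n ∈ t, c n • g n with hv
  have h1 : (‖v‖ : ℝ) ^ 2 = ‖(inner ℂ v v : ℂ)‖ := by
    rw [inner_self_eq_norm_sq_to_K]
    simp [norm_pow]
  have h2 : (inner ℂ v v : ℂ) = ∑ n ∈ t, (starRingEnd ℂ) (c n) * inner ℂ (g n) v := by
    rw [hv, sum_inner]
    exact Finset.sum_congr rfl fun n _ => inner_smul_left _ _ _
  have h3 : ‖(inner ℂ v v : ℂ)‖ ≤ ∑ n ∈ t, ‖c n‖ * ‖(inner ℂ (g n) v : ℂ)‖ := by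
    rw [h2]
    refine (norm_sum_le _ _).trans_eq ?_
    exact Finset.sum_congr rfl fun n _ => by rw [norm_mul, RCLike.norm_conj]
  have cs : (∑ n ∈ t, ‖c n‖ * ‖(inner ℂ (g n) v : ℂ)‖) ^ 2 ≤
      (∑ n ∈ t, ‖c n‖ ^ 2) * (∑ n ∈ t, ‖(inner ℂ (g n) v : ℂ)‖ ^ 2) :=
    Finset.sum_mul_sq_le_sq_mul_sq t _ _
  have h4 : ∑ n ∈ t, ‖(inner ℂ (g n) v : ℂ)‖ ^ 2 ≤ B * ‖v‖ ^ 2 := by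
    have : ∑ n ∈ t, ‖(inner ℂ (g n) v : ℂ)‖ ^ 2 = ∑ n ∈ t, ‖(inner ℂ v (g n) : ℂ)‖ ^ 2 :=
      Finset.sum_congr rfl fun n _ => by rw [norm_inner_symm]
    rw [this]
    exact (Summable.sum_le_tsum t (fun i _ => by positivity) (hsum v)).trans (hub v)
  have hS : 0 ≤ ∑ n ∈ t, ‖c n‖ ^ 2 := Finset.sum_nonneg fun n _ => by positivity
  have key : (‖v‖ ^ 2) ^ 2 ≤ (∑ n ∈ t, ‖c n‖ ^ 2) * (B * ‖v‖ ^ 2) := by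
    calc (‖v‖ ^ 2) ^ 2 = ‖(inner ℂ v v : ℂ)‖ ^ 2 := by rw [h1]
      _ ≤ (∑ n ∈ t, ‖c n‖ * ‖(inner ℂ (g n) v : ℂ)‖) ^ 2 := by
          apply pow_le_pow_left₀ (norm_nonneg _) h3
      _ ≤ (∑ n ∈ t, ‖c n‖ ^ 2) * (∑ n ∈ t, ‖(inner ℂ (g n) v : ℂ)‖ ^ 2) := cs
      _ ≤ (∑ n ∈ t, ‖c n‖ ^ 2) * (B * ‖v‖ ^ 2) := mul_le_mul_of_nonneg_left h4 hS
  rcases eq_or_lt_of_le (sq_nonneg ‖v‖) with h | h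
  · rw [← h]; positivity
  · nlinarith [key, h, hS, hB]

lemma myBesselSummable [CompleteSpace H] (g : ℕ → H) (B : ℝ) (hB : 0 < B)
    (hsum : ∀ y : H, Summable (fun n => ‖(inner ℂ y (g n) : ℂ)‖ ^ 2))
    (hub : ∀ y : H, ∑' n, ‖(inner ℂ y (g n) : ℂ)‖ ^ 2 ≤ B * ‖y‖ ^ 2)
    (x : H) : Summable (fun n => (inner ℂ (g n) x : ℂ) • g n) := by
  rw [summable_iff_vanishing]
  intro e he
  rcases Metric.mem_nhds_iff.1 he with ⟨ε, hε, hball⟩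
  have hc : Summable (fun n => ‖(inner ℂ (g n) x : ℂ)‖ ^ 2) := by
    simpa [norm_inner_symm] using hsum x
  obtain ⟨s, hs⟩ := (summable_iff_vanishing.1 hc)
    (Metric.ball 0 (ε ^ 2 / B)) (Metric.ball_mem_nhds _ (by positivity))
  refine ⟨s, fun t ht => ?_⟩
  apply hball
  simp only [Metric.mem_ball, dist_zero_right]
  have h1 := myNormSumSqLe g B hB.le hsum hub (fun n => inner ℂ (g n) x) t
  have h2 := hs t ht
  simp only [Metric.mem_ball, dist_zero_right, Real.norm_eq_abs] at h2
  have hnn : 0 ≤ ∑ n ∈ t, ‖(inner ℂ (g n) x : ℂ)‖ ^ 2 :=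
    Finset.sum_nonneg fun n _ => by positivity
  rw [abs_of_nonneg hnn] at h2
  have h3 : ‖∑ n ∈ t, (inner ℂ (g n) x : ℂ) • g n‖ ^ 2 < ε ^ 2 := by
    calc ‖∑ n ∈ t, (inner ℂ (g n) x : ℂ) • g n‖ ^ 2
        ≤ B * ∑ n ∈ t, ‖(inner ℂ (g n) x : ℂ)‖ ^ 2 := h1
      _ < B * (ε ^ 2 / B) := mul_lt_mul_of_pos_left h2 hB
      _ = ε ^ 2 := by field_simp
  exact lt_of_pow_lt_pow_left₀ 2 hε.le h3

end Aux

theorem stmt3 {H : Type*} [NormedAddCommGroup H] [InnerProductSpace ℂ H]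
    [CompleteSpace H] (f : ℕ → H)
    (hM : IsFrame (fun n => f n + f (n + 1)))
    (hN : IsFrame (fun n => f n - f (n + 1))) :
    IsFrame f ∧
      ∀ x : H,
        (4 : ℂ) • frameOp f x =
          frameOp (fun n => f n + f (n + 1)) x +
          frameOp (fun n => f n - f (n + 1)) x +
          (2 : ℂ) • ((inner ℂ (f 0) x : ℂ) • f 0) := by
  obtain ⟨AM, BM, hAM, hBM, hMx⟩ := hM
  obtain ⟨AN, BN, hAN, hBN, hNx⟩ := hN
  set B : ℝ := (BM + BN + 2 * ‖f 0‖ ^ 2) / 4 with hBdef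
  have hBpos : 0 < B := by positivity
  have hframe : ∀ x : H,
      Summable (fun n => ‖(inner ℂ x (f n) : ℂ)‖ ^ 2) ∧
      (AM + AN) / 4 * ‖x‖ ^ 2 ≤ ∑' n, ‖(inner ℂ x (f n) : ℂ)‖ ^ 2 ∧
      ∑' n, ‖(inner ℂ x (f n) : ℂ)‖ ^ 2 ≤ B * ‖x‖ ^ 2 := by
    intro x
    obtain ⟨hMs, hMl, hMu⟩ := hMx x
    obtain ⟨hNs, hNl, hNu⟩ := hNx x
    set u : ℕ → ℝ := fun n => ‖(inner ℂ x (f n) : ℂ)‖ ^ 2 with hudef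
    have key : ∀ n, ‖(inner ℂ x (f n + f (n+1)) : ℂ)‖ ^ 2 + ‖(inner ℂ x (f n - f (n+1)) : ℂ)‖ ^ 2
        = 2 * u n + 2 * u (n+1) := by
      intro n
      rw [inner_add_right, inner_sub_right]
      exact myPar _ _
    have hu : Summable u := by
      refine Summable.of_nonneg_of_le (fun n => by positivity)
        (fun n => ?_) ((hMs.add hNs).div_const 2)
      have := key n
      have h2 : (0:ℝ) ≤ u (n+1) := by positivity
      linarith
    have hu' : Summable (fun n => u (n+1)) := (summable_nat_add_iff 1).2 hu
    have e3 : ∑' n, u n = u 0 + ∑' n, u (n+1) := Summable.tsum_eq_zero_add hu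
    have e1 : ∑' n, (‖(inner ℂ x (f n + f (n+1)) : ℂ)‖ ^ 2 + ‖(inner ℂ x (f n - f (n+1)) : ℂ)‖ ^ 2)
        = 4 * ∑' n, u n - 2 * u 0 := by
      calc ∑' n, (‖(inner ℂ x (f n + f (n+1)) : ℂ)‖ ^ 2 + ‖(inner ℂ x (f n - f (n+1)) : ℂ)‖ ^ 2)
          = ∑' n, (2 * u n + 2 * u (n+1)) := tsum_congr key
        _ = 2 * ∑' n, u n + 2 * ∑' n, u (n+1) := by
            rw [Summable.tsum_add (hu.mul_left 2) (hu'.mul_left 2), tsum_mul_left, tsum_mul_left]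
        _ = 4 * ∑' n, u n - 2 * u 0 := by rw [e3]; ring
    have e2 : ∑' n, (‖(inner ℂ x (f n + f (n+1)) : ℂ)‖ ^ 2 + ‖(inner ℂ x (f n - f (n+1)) : ℂ)‖ ^ 2)
        = (∑' n, ‖(inner ℂ x (f n + f (n+1)) : ℂ)‖ ^ 2) +
          ∑' n, ‖(inner ℂ x (f n - f (n+1)) : ℂ)‖ ^ 2 := Summable.tsum_add hMs hNs
    have hu0 : u 0 ≤ ‖f 0‖ ^ 2 * ‖x‖ ^ 2 := by
      have h1 := norm_inner_le_norm (𝕜 := ℂ) x (f 0)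
      have h2 : ‖(inner ℂ x (f 0) : ℂ)‖ ^ 2 ≤ (‖x‖ * ‖f 0‖) ^ 2 :=
        pow_le_pow_left₀ (norm_nonneg _) h1 2
      calc u 0 = ‖(inner ℂ x (f 0) : ℂ)‖ ^ 2 := rfl
        _ ≤ (‖x‖ * ‖f 0‖) ^ 2 := h2
        _ = ‖f 0‖ ^ 2 * ‖x‖ ^ 2 := by ring
    have hu0' : 0 ≤ u 0 := by positivity
    refine ⟨hu, ?_, ?_⟩
    · nlinarith [e1, e2, hMl, hNl, hu0']
    · rw [hBdef]
      nlinarith [e1, e2, hMu, hNu, hu0]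
  constructor
  · exact ⟨(AM + AN) / 4, B, by positivity, hBpos, hframe⟩
  · intro x
    have hSf : Summable (fun n => (inner ℂ (f n) x : ℂ) • f n) :=
      myBesselSummable f B hBpos (fun y => (hframe y).1) (fun y => (hframe y).2.2) x
    have hSM : Summable (fun n => (inner ℂ (f n + f (n+1)) x : ℂ) • (f n + f (n+1))) :=
      myBesselSummable (fun n => f n + f (n+1)) BM hBM
        (fun y => (hMx y).1) (fun y => (hMx y).2.2) x
    have hSN : Summable (fun n => (inner ℂ (f n - f (n+1)) x : ℂ) • (f n - f (n+1))) :=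
      myBesselSummable (fun n => f n - f (n+1)) BN hBN
        (fun y => (hNx y).1) (fun y => (hNx y).2.2) x
    set h : ℕ → H := fun n => (inner ℂ (f n) x : ℂ) • f n with hh
    have hSf' : Summable (fun n => h (n+1)) := (summable_nat_add_iff 1).2 hSf
    have e0 : ∑' n, h n = h 0 + ∑' n, h (n+1) := Summable.tsum_eq_zero_add hSf
    have emain : frameOp (fun n => f n + f (n + 1)) x + frameOp (fun n => f n - f (n + 1)) x
        = (2:ℂ) • ∑' n, h n + (2:ℂ) • ∑' n, h (n+1) := by
      calc frameOp (fun n => f n + f (n + 1)) x + frameOp (fun n => f n - f (n + 1)) x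
          = ∑' n, ((inner ℂ (f n + f (n+1)) x : ℂ) • (f n + f (n+1)) +
                   (inner ℂ (f n - f (n+1)) x : ℂ) • (f n - f (n+1))) := (Summable.tsum_add hSM hSN).symm
        _ = ∑' n, ((2:ℂ) • h n + (2:ℂ) • h (n+1)) := tsum_congr fun n => myVecId _ _ _
        _ = (2:ℂ) • ∑' n, h n + (2:ℂ) • ∑' n, h (n+1) := by
            rw [Summable.tsum_add (hSf.const_smul (2:ℂ)) (hSf'.const_smul (2:ℂ)),
              Summable.tsum_const_smul _ hSf, Summable.tsum_const_smul _ hSf']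
    have hT : frameOp f x = ∑' n, h n := rfl
    rw [hT, emain, e0]
    have h0 : h 0 = (inner ℂ (f 0) x : ℂ) • f 0 := rfl
    rw [← h0]
    module
end

section
/- Let F = {f_n}_{n=1}^∞ be a Bessel sequence in a complex Hilbert space H represented by a bounded linear operator T ∈ B(H) (so T(f_n + f_{n+1}) = f_{n+2} for all n ≥ 1), and suppose M = {f_n + f_{n+1}}_{n=1}^∞ is a frame for H. Then T is injective if and only if ker T_{F'} ⊆ ker T_M, where F' = {f_{n+2}}_{n=1}^∞ and T_{F'}, T_M denote the synthesis operators of F' and M. -/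
open scoped ComplexConjugate ENNReal NNReal

/-- A sequence `g` in a complex Hilbert space is a Bessel sequence. -/
def IsBessel {H : Type*} [NormedAddCommGroup H] [InnerProductSpace ℂ H]
    (g : ℕ → H) : Prop :=
  ∃ B : ℝ, 0 < B ∧ ∀ x : H,
    Summable (fun n => ‖(inner ℂ x (g n) : ℂ)‖ ^ 2) ∧
    ∑' n, ‖(inner ℂ x (g n) : ℂ)‖ ^ 2 ≤ B * ‖x‖ ^ 2

/-- The kernel of the synthesis operator of a sequence `g`, viewed as the set of
square-summable scalar sequences `c` with `∑ₙ cₙ gₙ = 0`. -/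
def synthKer {H : Type*} [NormedAddCommGroup H] [InnerProductSpace ℂ H]
    (g : ℕ → H) : Set (ℕ → ℂ) :=
  {c | Memℓp c 2 ∧ HasSum (fun n => c n • g n) 0}



section Aux

variable {H : Type*} [NormedAddCommGroup H] [InnerProductSpace ℂ H]

lemma aux_finset_bound {g : ℕ → H} {B : ℝ} (hB : 0 < B)
    (hg : ∀ x : H, Summable (fun n => ‖(inner ℂ x (g n) : ℂ)‖ ^ 2) ∧
      ∑' n, ‖(inner ℂ x (g n) : ℂ)‖ ^ 2 ≤ B * ‖x‖ ^ 2)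
    (c : ℕ → ℂ) (s : Finset ℕ) :
    ‖∑ n ∈ s, c n • g n‖ ^ 2 ≤ B * ∑ n ∈ s, ‖c n‖ ^ 2 := by
  set v := ∑ n ∈ s, c n • g n with hv
  have h1 : (inner ℂ v v : ℂ) = ∑ n ∈ s, c n * inner ℂ v (g n) := by
    rw [hv]
    conv_lhs => rw [inner_sum]
    exact Finset.sum_congr rfl fun n _ => inner_smul_right _ _ _
  have h2 : ‖v‖ ^ 2 = ‖(inner ℂ v v : ℂ)‖ := by
    rw [@inner_self_eq_norm_sq_to_K ℂ]
    simp [norm_pow]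
  have h3 : ‖(inner ℂ v v : ℂ)‖ ≤ ∑ n ∈ s, ‖c n‖ * ‖(inner ℂ v (g n) : ℂ)‖ := by
    rw [h1]
    refine le_trans (norm_sum_le _ _) (le_of_eq ?_)
    exact Finset.sum_congr rfl fun n _ => norm_mul _ _
  have h4 : (∑ n ∈ s, ‖c n‖ * ‖(inner ℂ v (g n) : ℂ)‖) ^ 2 ≤
      (∑ n ∈ s, ‖c n‖ ^ 2) * (∑ n ∈ s, ‖(inner ℂ v (g n) : ℂ)‖ ^ 2) :=
    Finset.sum_mul_sq_le_sq_mul_sq s _ _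
  have h5 : ∑ n ∈ s, ‖(inner ℂ v (g n) : ℂ)‖ ^ 2 ≤ B * ‖v‖ ^ 2 :=
    le_trans ((hg v).1.sum_le_tsum s (fun n _ => sq_nonneg _)) (hg v).2
  have hcn : (0:ℝ) ≤ ∑ n ∈ s, ‖c n‖ ^ 2 := Finset.sum_nonneg fun n _ => sq_nonneg _
  have hs3 : (0:ℝ) ≤ ∑ n ∈ s, ‖c n‖ * ‖(inner ℂ v (g n) : ℂ)‖ :=
    Finset.sum_nonneg fun n _ => mul_nonneg (norm_nonneg _) (norm_nonneg _)
  have key : (‖v‖ ^ 2) ^ 2 ≤ (∑ n ∈ s, ‖c n‖ ^ 2) * (B * ‖v‖ ^ 2) := by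
    calc (‖v‖ ^ 2) ^ 2 = ‖(inner ℂ v v : ℂ)‖ ^ 2 := by rw [h2]
    _ ≤ (∑ n ∈ s, ‖c n‖ * ‖(inner ℂ v (g n) : ℂ)‖) ^ 2 := by
        apply pow_le_pow_left₀ (norm_nonneg _) h3 2
    _ ≤ (∑ n ∈ s, ‖c n‖ ^ 2) * (∑ n ∈ s, ‖(inner ℂ v (g n) : ℂ)‖ ^ 2) := h4
    _ ≤ (∑ n ∈ s, ‖c n‖ ^ 2) * (B * ‖v‖ ^ 2) := by
        exact mul_le_mul_of_nonneg_left h5 hcn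
  nlinarith [key, mul_nonneg hB.le hcn, sq_nonneg ‖v‖]

variable [CompleteSpace H]

lemma aux_summable {g : ℕ → H} {B : ℝ} (hB : 0 < B)
    (hg : ∀ x : H, Summable (fun n => ‖(inner ℂ x (g n) : ℂ)‖ ^ 2) ∧
      ∑' n, ‖(inner ℂ x (g n) : ℂ)‖ ^ 2 ≤ B * ‖x‖ ^ 2)
    {c : ℕ → ℂ} (hc : Summable fun n => ‖c n‖ ^ 2) :
    Summable fun n => c n • g n := by
  rw [summable_iff_vanishing]
  intro e he
  obtain ⟨ε, hε, hball⟩ := Metric.mem_nhds_iff.mp he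
  obtain ⟨s, hs⟩ := summable_iff_vanishing.mp hc (Metric.ball 0 (ε ^ 2 / B))
    (Metric.ball_mem_nhds 0 (by positivity))
  refine ⟨s, fun t ht => hball ?_⟩
  rw [Metric.mem_ball, dist_zero_right]
  have h2 := hs t ht
  rw [Metric.mem_ball, dist_zero_right, Real.norm_eq_abs] at h2
  have h2' : ∑ n ∈ t, ‖c n‖ ^ 2 < ε ^ 2 / B := lt_of_abs_lt h2
  have h1 := aux_finset_bound hB hg c t
  have : ‖∑ n ∈ t, c n • g n‖ ^ 2 < ε ^ 2 := by
    calc ‖∑ n ∈ t, c n • g n‖ ^ 2 ≤ B * ∑ n ∈ t, ‖c n‖ ^ 2 := h1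
    _ < B * (ε ^ 2 / B) := by exact mul_lt_mul_of_pos_left h2' hB
    _ = ε ^ 2 := by field_simp
  nlinarith [norm_nonneg (∑ n ∈ t, c n • g n)]

lemma aux_tsum_bound {g : ℕ → H} {B : ℝ} (hB : 0 < B)
    (hg : ∀ x : H, Summable (fun n => ‖(inner ℂ x (g n) : ℂ)‖ ^ 2) ∧
      ∑' n, ‖(inner ℂ x (g n) : ℂ)‖ ^ 2 ≤ B * ‖x‖ ^ 2)
    {c : ℕ → ℂ} (hc : Summable fun n => ‖c n‖ ^ 2)
    {x : H} (hx : HasSum (fun n => c n • g n) x) :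
    ‖x‖ ^ 2 ≤ B * ∑' n, ‖c n‖ ^ 2 := by
  have ht : Filter.Tendsto (fun s : Finset ℕ => ‖∑ n ∈ s, c n • g n‖ ^ 2)
      Filter.atTop (nhds (‖x‖ ^ 2)) := by
    exact ((continuous_norm.tendsto x).comp hx).pow 2
  refine le_of_tendsto ht (Filter.Eventually.of_forall fun s => ?_)
  refine le_trans (aux_finset_bound hB hg c s) ?_
  exact mul_le_mul_of_nonneg_left
    (hc.sum_le_tsum s (fun n _ => sq_nonneg _)) hB.le

end Aux

theorem stmt18 {H : Type*} [NormedAddCommGroup H] [InnerProductSpace ℂ H]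
    [CompleteSpace H] (f : ℕ → H)
    (hF : IsBessel f)
    (hM : IsFrame (fun n => f n + f (n + 1)))
    (T : H →L[ℂ] H)
    (hrep : ∀ n : ℕ, T (f n + f (n + 1)) = f (n + 2)) :
    Function.Injective T ↔
      synthKer (fun n => f (n + 2)) ⊆ synthKer (fun n => f n + f (n + 1)) := by
  obtain ⟨A, Bm, hA, hBm, hMp⟩ := hM
  set m : ℕ → H := fun n => f n + f (n + 1) with hm
  have hMb : ∀ x : H, Summable (fun n => ‖(inner ℂ x (m n) : ℂ)‖ ^ 2) ∧
      ∑' n, ‖(inner ℂ x (m n) : ℂ)‖ ^ 2 ≤ Bm * ‖x‖ ^ 2 := fun x => ⟨(hMp x).1, (hMp x).2.2⟩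
  have hmem : ∀ c : ℕ → ℂ, Memℓp c 2 ↔ Summable fun n => ‖c n‖ ^ 2 := by
    intro c
    rw [memℓp_gen_iff (by norm_num : 0 < (2 : ℝ≥0∞).toReal)]
    refine summable_congr fun n => ?_
    rw [show ((2 : ℝ≥0∞)).toReal = (2 : ℝ) by norm_num, Real.rpow_two]
  have hTmap : ∀ (c : ℕ → ℂ) (x : H), HasSum (fun n => c n • m n) x →
      HasSum (fun n => c n • f (n + 2)) (T x) := by
    intro c x hx
    simpa only [ContinuousLinearMap.map_smul, hm, hrep] using hx.mapL T
  constructor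
  · -- injective → kernel inclusion
    intro hT c hc
    obtain ⟨hc2, hc0⟩ := hc
    have hc2' : Summable fun n => ‖c n‖ ^ 2 := (hmem c).mp hc2
    obtain ⟨x, hx⟩ := aux_summable hBm hMb hc2'
    have hTx : HasSum (fun n => c n • f (n + 2)) (T x) := hTmap c x hx
    have hx0 : T x = 0 := (hTx.unique hc0)
    have : x = 0 := hT (by simpa using hx0)
    exact ⟨(hmem c).mpr ((hmem c).mp hc2), this ▸ hx⟩
  · -- kernel inclusion → injective
    intro hker
    rw [injective_iff_map_eq_zero]
    intro x hx
    -- the coefficient sequence for any y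
    have hsum : ∀ y : H, Summable fun n => (inner ℂ (m n) y : ℂ) • m n := by
      intro y
      refine aux_summable hBm hMb ?_
      refine ((hMp y).1).congr fun n => ?_
      rw [← norm_inner_symm]
    -- the frame operator
    have hSbound : ∀ y : H, ‖∑' n, (inner ℂ (m n) y : ℂ) • m n‖ ≤ Bm * ‖y‖ := by
      intro y
      have hsy : Summable fun n => ‖(inner ℂ (m n) y : ℂ)‖ ^ 2 := by
        refine ((hMp y).1).congr fun n => ?_
        rw [← norm_inner_symm]
      have h1 := aux_tsum_bound hBm hMb hsy (hsum y).hasSum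
      have h2 : ∑' n, ‖(inner ℂ (m n) y : ℂ)‖ ^ 2 ≤ Bm * ‖y‖ ^ 2 := by
        refine le_trans (le_of_eq (tsum_congr fun n => ?_)) (hMp y).2.2
        rw [← norm_inner_symm]
      have h3 : ‖∑' n, (inner ℂ (m n) y : ℂ) • m n‖ ^ 2 ≤ (Bm * ‖y‖) ^ 2 := by
        calc ‖∑' n, (inner ℂ (m n) y : ℂ) • m n‖ ^ 2 ≤ Bm * ∑' n, ‖(inner ℂ (m n) y : ℂ)‖ ^ 2 := h1
        _ ≤ Bm * (Bm * ‖y‖ ^ 2) := mul_le_mul_of_nonneg_left h2 hBm.le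
        _ = (Bm * ‖y‖) ^ 2 := by ring
      nlinarith [norm_nonneg (∑' n, (inner ℂ (m n) y : ℂ) • m n), mul_nonneg hBm.le (norm_nonneg y)]
    let S0 : H →ₗ[ℂ] H :=
      { toFun := fun y => ∑' n, (inner ℂ (m n) y : ℂ) • m n
        map_add' := fun y z => by
          show (∑' n, (inner ℂ (m n) (y + z) : ℂ) • m n) =
            (∑' n, (inner ℂ (m n) y : ℂ) • m n) + ∑' n, (inner ℂ (m n) z : ℂ) • m n
          rw [← Summable.tsum_add (hsum y) (hsum z)]
          exact tsum_congr fun n => by rw [inner_add_right, add_smul]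
        map_smul' := fun a y => by
          simp only [RingHom.id_apply]
          rw [← ((hsum y).hasSum.const_smul a).tsum_eq]
          exact tsum_congr fun n => by rw [inner_smul_right, smul_smul] }
    let S : H →L[ℂ] H := S0.mkContinuous Bm hSbound
    have hSval : ∀ y : H, HasSum (fun n => (inner ℂ (m n) y : ℂ) • m n) (S y) :=
      fun y => (hsum y).hasSum
    -- coercivity
    have hcoer : ∀ y : H, A * ‖y‖ ^ 2 ≤ Complex.re (inner ℂ y (S y)) := by
      intro y
      have h1 : HasSum (fun n => (inner ℂ y ((inner ℂ (m n) y : ℂ) • m n) : ℂ)) (inner ℂ y (S y)) :=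
        (hSval y).mapL (innerSL ℂ y)
      have h2 : HasSum (fun n => ((‖(inner ℂ y (m n) : ℂ)‖ ^ 2 : ℝ) : ℂ)) (inner ℂ y (S y)) := by
        refine h1.congr_fun fun n => ?_
        have hconj : (inner ℂ (m n) y : ℂ) = (starRingEnd ℂ) (inner ℂ y (m n) : ℂ) :=
          (inner_conj_symm (m n) y).symm
        rw [inner_smul_right, hconj, RCLike.conj_mul]
        norm_cast
      have h3 : HasSum (fun n => ‖(inner ℂ y (m n) : ℂ)‖ ^ 2) (Complex.re (inner ℂ y (S y))) := by
        have := h2.mapL Complex.reCLM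
        simpa [← Complex.ofReal_pow, Complex.ofReal_re] using this
      calc A * ‖y‖ ^ 2 ≤ ∑' n, ‖(inner ℂ y (m n) : ℂ)‖ ^ 2 := (hMp y).2.1
      _ = Complex.re (inner ℂ y (S y)) := h3.tsum_eq
    -- S is bounded below
    have hlow : ∀ y : H, A * ‖y‖ ≤ ‖S y‖ := by
      intro y
      rcases eq_or_ne y 0 with rfl | hy
      · simp
      have h1 : A * ‖y‖ ^ 2 ≤ ‖y‖ * ‖S y‖ := by
        refine le_trans (hcoer y) (le_trans (Complex.re_le_norm _) ?_)
        exact norm_inner_le_norm y (S y)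
      have hy' : 0 < ‖y‖ := norm_pos_iff.mpr hy
      nlinarith
    -- S is surjective
    have hsurj : Function.Surjective S := by
      have hanti : AntilipschitzWith (⟨A, hA.le⟩ : NNReal)⁻¹ S := by
        refine S.antilipschitz_of_bound fun y => ?_
        rw [show (((⟨A, hA.le⟩ : NNReal)⁻¹ : NNReal) : ℝ) = A⁻¹ from NNReal.coe_inv _, inv_mul_eq_div, le_div_iff₀ hA]
        linarith [hlow y]
      have hclosed : IsClosed (Set.range S) := hanti.isClosed_range S.uniformContinuous
      have hclosed' : IsClosed ((LinearMap.range (S : H →ₗ[ℂ] H) : Submodule ℂ H) : Set H) := by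
        convert hclosed using 1
        exact LinearMap.coe_range _
      haveI : CompleteSpace (LinearMap.range (S : H →ₗ[ℂ] H)) := hclosed'.completeSpace_coe
      have horth : (LinearMap.range (S : H →ₗ[ℂ] H) : Submodule ℂ H)ᗮ = ⊥ := by
        rw [Submodule.eq_bot_iff]
        intro y hy
        have h0 : (inner ℂ (S y) y : ℂ) = 0 := hy (S y) (LinearMap.mem_range_self _ y)
        have h0' : (inner ℂ y (S y) : ℂ) = 0 := by
          rw [← inner_conj_symm, h0, map_zero]
        have hc := hcoer y
        rw [h0'] at hc
        simp only [Complex.zero_re] at hc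
        have h2 : ‖y‖ ^ 2 ≤ 0 := by nlinarith
        have h3 : ‖y‖ = 0 := sq_eq_zero_iff.mp (le_antisymm h2 (sq_nonneg _))
        exact norm_eq_zero.mp h3
      have htop : (LinearMap.range (S : H →ₗ[ℂ] H) : Submodule ℂ H) = ⊤ :=
        Submodule.orthogonal_eq_bot_iff.mp horth
      intro z
      have : z ∈ LinearMap.range (S : H →ₗ[ℂ] H) := htop ▸ Submodule.mem_top
      exact this
    obtain ⟨y, hy⟩ := hsurj x
    set c : ℕ → ℂ := fun n => inner ℂ (m n) y with hc
    have hcm : HasSum (fun n => c n • m n) x := hy ▸ hSval y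
    have hcl2 : Memℓp c 2 := by
      rw [hmem]
      refine ((hMp y).1).congr fun n => ?_
      rw [← norm_inner_symm]
    have hker' : c ∈ synthKer (fun n => f (n + 2)) := by
      refine ⟨hcl2, ?_⟩
      have := hTmap c x hcm
      rwa [hx] at this
    obtain ⟨_, hzero⟩ := hker hker'
    exact hcm.unique hzero
end
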